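/- A binary word is a primitive (lower or upper) Christoffel word if and only if it is balanced and unbordered. -/

import Mathlib

/-- A word is primitive if it is not a proper power: `w = v^n` implies `n = 1`. -/
def Primitive {α : Type*} (w : List α) : Prop :=
  ∀ (v : List α) (n : ℕ), w = (List.replicate n v).flatten → n = 1

/-- A Lyndon word: nonempty and lexicographically strictly smaller than all
its proper nonempty suffixes. -/
def Lyndon {α : Type*} [LinearOrder α] (w : List α) : Prop :=
  w ≠ [] ∧ ∀ u v : List α, w = u ++ v → u ≠ [] → v ≠ [] → List.Lex (· < ·) w v

/-- A Lyndon word for the reversed order `1 < 0` on `Bool`. -/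
def LyndonRev (w : List Bool) : Prop :=
  w ≠ [] ∧ ∀ u v : List Bool, w = u ++ v → u ≠ [] → v ≠ [] → List.Lex (· > ·) w v

/-- A binary word is balanced if the numbers of `1`s in any two factors of the
same length differ by at most 1. (`false` plays the role of `0`, `true` of `1`.) -/
def Balanced01 (w : List Bool) : Prop :=
  ∀ u v : List Bool, u <:+: w → v <:+: w → u.length = v.length →
    (u.count true : ℤ) - (v.count true : ℤ) ≤ 1

/-- `w` has period `p`: `w[i] = w[i+p]` for all valid indices. -/
def HasPeriod (w : List Bool) (p : ℕ) : Prop :=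
  ∀ i : ℕ, i + p < w.length → w[i]? = w[i + p]?

/-- A central word: it has coprime periods `p`, `q` and length `p + q - 2`. -/
def Central (w : List Bool) : Prop :=
  ∃ p q : ℕ, Nat.Coprime p q ∧ HasPeriod w p ∧ HasPeriod w q ∧ w.length + 2 = p + q

/-- The lower Christoffel word of slope `b/a`: letter `i` is `1` (`true`) iff the
line `y = bx/(a+b)`... encoded via floor differences `⌊(i+1)b/(a+b)⌋ - ⌊ib/(a+b)⌋`. -/
def chr (a b : ℕ) : List Bool :=
  List.ofFn (fun i : Fin (a + b) =>
    decide ((i : ℕ) * b / (a + b) < ((i : ℕ) + 1) * b / (a + b)))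

/-- An (upward) digitally convex word: all factors of its Lyndon factorization
(for the order `0 < 1`) are balanced Lyndon words, i.e. primitive lower
Christoffel words. -/
def DC (w : List Bool) : Prop :=
  ∃ L : List (List Bool), L.flatten = w ∧ (∀ x ∈ L, Lyndon x ∧ Balanced01 x) ∧
    L.Chain' (fun a b => ¬ List.Lex (· < ·) a b)

/-- A downward digitally convex word: all factors of its Lyndon factorization
for the order `1 < 0` are balanced. -/
def DCdown (w : List Bool) : Prop :=
  ∃ L : List (List Bool), L.flatten = w ∧ (∀ x ∈ L, LyndonRev x ∧ Balanced01 x) ∧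
    L.Chain' (fun a b => ¬ List.Lex (· > ·) a b)

/-- `(u, v)` is the standard factorization of `u ++ v`: both parts nonempty and
`v` is the lexicographically least proper nonempty suffix of `u ++ v`. -/
def StdFact (u v : List Bool) : Prop :=
  u ≠ [] ∧ v ≠ [] ∧
    ∀ s : List Bool, s ≠ [] → s ≠ u ++ v → s <:+ u ++ v →
      s = v ∨ List.Lex (· < ·) v s

/-- A word is unbordered if it has no nonempty proper border. -/
def Unbordered (w : List Bool) : Prop :=
  ∀ u : List Bool, u <+: w → u <:+ w → u ≠ w → u = []

set_option linter.unnecessarySeqFocus false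
section ChristoffelAux
/-- prefix count of trues -/
def cnt (w : List Bool) (k : ℕ) : ℕ := (w.take k).count true

lemma cnt_zero (w : List Bool) : cnt w 0 = 0 := rfl

lemma cnt_length (w : List Bool) (k : ℕ) (h : w.length ≤ k) : cnt w k = w.count true := by
  unfold cnt; rw [List.take_of_length_le h]

lemma cnt_succ (w : List Bool) (i : ℕ) (h : i < w.length) :
    cnt w (i + 1) = cnt w i + (if w[i] then 1 else 0) := by
  unfold cnt
  rw [List.take_succ, List.count_append, List.getElem?_eq_getElem h]
  cases hb : w[i] <;> simp [hb, List.count_singleton']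

lemma ext_cnt {w₁ w₂ : List Bool} (hl : w₁.length = w₂.length)
    (hc : ∀ k, cnt w₁ k = cnt w₂ k) : w₁ = w₂ := by
  apply List.ext_getElem hl
  intro i h1 h2
  have e1 := cnt_succ w₁ i h1
  have e2 := cnt_succ w₂ i h2
  rw [hc i, hc (i+1)] at e1
  rw [e1] at e2
  cases hb1 : w₁[i] <;> cases hb2 : w₂[i] <;> simp [hb1, hb2] at e2 ⊢

lemma chr_length (a b : ℕ) : (chr a b).length = a + b := by simp [chr]

lemma div_mod_cond (b n i : ℕ) (hn : 0 < n) :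
    (i * b / n < (i + 1) * b / n) ↔ n ≤ i * b % n + b := by
  have h1 : (i+1) * b = i * b % n + b + n * (i * b / n) := by
    have h2 : (i+1)*b = i*b + b := by ring
    have h3 := Nat.div_add_mod (i*b) n
    omega
  rw [h1, Nat.add_mul_div_left _ _ hn]
  constructor
  · intro h
    have : 0 < (i * b % n + b) / n := by omega
    exact (Nat.div_pos_iff.1 this).2
  · intro h
    have : 0 < (i * b % n + b) / n := Nat.div_pos_iff.2 ⟨by omega, h⟩
    omega

lemma chr_getElem (a b : ℕ) (i : ℕ) (h : i < a + b) :
    (chr a b)[i]'(by simpa [chr_length] using h) = decide (a + b ≤ i * b % (a + b) + b) := by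
  unfold chr
  rw [List.getElem_ofFn]
  simp only []
  congr 1
  rw [eq_iff_iff]
  exact div_mod_cond b (a+b) i (by omega)

lemma cnt_chr (a b : ℕ) (hn : 0 < a + b) (k : ℕ) (hk : k ≤ a + b) :
    cnt (chr a b) k = k * b / (a + b) := by
  induction k with
  | zero => simp [cnt_zero]
  | succ k ih =>
    have hk' : k ≤ a + b := by omega
    have hklt : k < (chr a b).length := by rw [chr_length]; omega
    rw [cnt_succ _ _ hklt, ih hk']
    have hg := chr_getElem a b k (by omega)
    have h1 : (k+1) * b = k * b % (a+b) + b + (a+b) * (k * b / (a+b)) := by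
      have h2 : (k+1)*b = k*b + b := by ring
      have h3 := Nat.div_add_mod (k*b) (a+b)
      omega
    rw [h1, Nat.add_mul_div_left _ _ hn]
    have hmlt : k * b % (a+b) < a + b := Nat.mod_lt _ hn
    by_cases hc : a + b ≤ k * b % (a+b) + b
    · have : (k * b % (a+b) + b) / (a+b) = 1 :=
        Nat.div_eq_of_lt_le (by omega) (by omega)
      rw [hg]; simp [hc]; omega
    · have : (k * b % (a+b) + b) / (a+b) = 0 := Nat.div_eq_of_lt (by omega)
      rw [hg]; simp [hc]; omega

lemma count_true_chr (a b : ℕ) (hn : 0 < a + b) : (chr a b).count true = b := by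
  have := cnt_chr a b hn (a+b) le_rfl
  rw [cnt_length _ _ (by rw [chr_length])] at this
  rw [this, Nat.mul_div_cancel_left _ hn]

lemma div_add_le (n x y : ℕ) (hn : 0 < n) : x / n + y / n ≤ (x + y) / n := by
  rw [Nat.le_div_iff_mul_le hn]
  have h1 := Nat.div_mul_le_self x n
  have h2 := Nat.div_mul_le_self y n
  have : (x / n + y / n) * n = x / n * n + y / n * n := by ring
  omega

lemma div_add_ge (n x y : ℕ) (hn : 0 < n) : (x + y) / n ≤ x / n + y / n + 1 := by
  have h1 := Nat.div_add_mod x n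
  have h2 := Nat.div_add_mod y n
  have hx : x % n < n := Nat.mod_lt _ hn
  have hy : y % n < n := Nat.mod_lt _ hn
  have h3 : (x + y) / n < x / n + y / n + 2 := by
    rw [Nat.div_lt_iff_lt_mul hn]
    have : (x / n + y / n + 2) * n = n * (x/n) + n * (y/n) + n + n := by ring
    omega
  omega

lemma cnt_infix (w s u t : List Bool) (h : w = s ++ u ++ t) :
    cnt w s.length + u.count true = cnt w (s.length + u.length) := by
  subst h
  unfold cnt
  have h1 : (s ++ u ++ t).take s.length = s := by
    rw [List.append_assoc, List.take_left]
  have h2 : (s ++ u ++ t).take (s.length + u.length) = s ++ u := by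
    have h3 : s.length + u.length = (s ++ u).length := by simp
    rw [h3, List.take_left]
  rw [h1, h2, List.count_append]

lemma balanced_chr (a b : ℕ) : Balanced01 (chr a b) := by
  rcases Nat.eq_zero_or_pos (a + b) with hn | hn
  · intro u v hu hv _
    have hnil : chr a b = [] := by
      have := chr_length a b
      rw [hn] at this
      exact List.length_eq_zero_iff.1 this
    rw [hnil] at hu hv
    rw [List.eq_nil_of_infix_nil hu, List.eq_nil_of_infix_nil hv]
    simp
  · intro u v hu hv hl
    obtain ⟨s, t, hs⟩ := hu
    obtain ⟨p, q, hp⟩ := hv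
    have hcu := cnt_infix _ s u t hs.symm
    have hcv := cnt_infix _ p v q hp.symm
    have hsu : s.length + u.length ≤ a + b := by
      have h1 : (s ++ u ++ t).length = a + b := by rw [hs, chr_length]
      simp at h1; omega
    have hpv : p.length + v.length ≤ a + b := by
      have h1 : (p ++ v ++ q).length = a + b := by rw [hp, chr_length]
      simp at h1; omega
    rw [← hl] at hcv hpv
    have hbl : ∀ i k, i + k ≤ a + b →
        cnt (chr a b) (i + k) = (i*b + k*b) / (a+b) := by
      intro i k hik
      rw [cnt_chr a b hn _ hik]
      congr 1
      ring
    rw [hbl _ _ hsu] at hcu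
    rw [hbl _ _ hpv] at hcv
    rw [cnt_chr a b hn s.length (by omega)] at hcu
    rw [cnt_chr a b hn p.length (by omega)] at hcv
    have e1 : (s.length * b + u.length * b) / (a+b) ≤
        s.length * b / (a+b) + u.length * b / (a+b) + 1 := div_add_ge _ _ _ hn
    have e2 : p.length * b / (a+b) + u.length * b / (a+b) ≤
        (p.length * b + u.length * b) / (a+b) := div_add_le _ _ _ hn
    omega

lemma modsum (n x y : ℕ) (hn : 0 < n) (h : (x + y) % n = 0) :
    x % n + y % n = 0 ∨ x % n + y % n = n := by
  have h1 : (x % n + y % n) % n = 0 := by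
    rw [Nat.add_mod] at h
    omega
  have h2 : x % n < n := Nat.mod_lt _ hn
  have h3 : y % n < n := Nat.mod_lt _ hn
  rcases Nat.lt_or_ge (x % n + y % n) n with hlt | hge
  · left
    rw [Nat.mod_eq_of_lt hlt] at h1
    omega
  · right
    have h5 : x % n + y % n - n < n := by omega
    have h4 : (x % n + y % n) % n = x % n + y % n - n := by
      rw [Nat.mod_eq_sub_mod hge, Nat.mod_eq_of_lt h5]
    omega

lemma unbordered_small (w : List Bool) (h : w.length ≤ 1) : Unbordered w := by
  intro u hu hs hne
  rcases u with _ | ⟨x, u⟩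
  · rfl
  · exfalso
    have h1 : (x :: u).length ≤ w.length := hu.length_le
    have h2 : (x :: u).length = w.length → x :: u = w :=
      fun hl => List.IsPrefix.eq_of_length hu hl
    have h3 : (x :: u).length < w.length := by
      rcases Nat.lt_or_ge (x::u).length w.length with h' | h'
      · exact h'
      · exact absurd (h2 (by omega)) hne
    simp at h3 ⊢
    omega

lemma unbordered_chr (a b : ℕ) (hab : Nat.Coprime a b) : Unbordered (chr a b) := by
  rcases Nat.lt_or_ge (a + b) 2 with hn | hn
  · exact unbordered_small _ (by rw [chr_length]; omega)
  have ha : 1 ≤ a := by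
    by_contra h
    have h0 : a = 0 := by omega
    rw [h0] at hab
    have := Nat.coprime_zero_left b |>.1 hab
    omega
  have hb : 1 ≤ b := by
    by_contra h
    have h0 : b = 0 := by omega
    rw [h0] at hab
    have := Nat.coprime_zero_right a |>.1 hab
    omega
  have hbn : Nat.Coprime b (a + b) := Nat.coprime_add_self_right.2 hab.symm
  intro u hu hs hne
  by_contra hunil
  have hk1 : 1 ≤ u.length := by
    rcases u with _ | _
    · exact absurd rfl hunil
    · simp
  have hklt : u.length < a + b := by
    have h1 : u.length ≤ (chr a b).length := hu.length_le
    rw [chr_length] at h1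
    rcases Nat.lt_or_ge u.length (a+b) with h' | h'
    · exact h'
    · exfalso
      exact hne (List.IsPrefix.eq_of_length hu (by rw [chr_length]; omega))
  set k := u.length with hk
  -- count of u as a prefix
  obtain ⟨t, ht⟩ := hu
  have hpre : cnt (chr a b) 0 + u.count true = cnt (chr a b) (0 + k) := by
    have := cnt_infix (chr a b) [] u t (by simpa using ht.symm)
    simpa using this
  rw [cnt_zero] at hpre
  simp only [Nat.zero_add] at hpre
  rw [cnt_chr a b (by omega) k (by omega)] at hpre
  -- count of u as a suffix
  obtain ⟨v, hv⟩ := hs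
  have hvlen : v.length = a + b - k := by
    have h1 : (v ++ u).length = a + b := by rw [hv, chr_length]
    simp at h1
    omega
  have hsuf : cnt (chr a b) v.length + u.count true = cnt (chr a b) (v.length + k) := by
    have := cnt_infix (chr a b) v u [] (by simpa using hv.symm)
    simpa using this
  rw [hvlen] at hsuf
  have hnk : a + b - k + k = a + b := by omega
  rw [hnk, cnt_chr a b (by omega) (a+b) le_rfl,
    cnt_chr a b (by omega) (a+b-k) (by omega)] at hsuf
  rw [Nat.mul_div_cancel_left _ (by omega : 0 < a+b)] at hsuf
  -- mod facts
  have hd1 : ¬ ((a+b) ∣ k * b) := by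
    intro hdvd
    have h2 := (Nat.Coprime.dvd_of_dvd_mul_right (hbn.symm)) hdvd
    have := Nat.le_of_dvd (by omega) h2
    omega
  have hd2 : ¬ ((a+b) ∣ (a + b - k) * b) := by
    intro hdvd
    have h2 := (Nat.Coprime.dvd_of_dvd_mul_right (hbn.symm)) hdvd
    have := Nat.le_of_dvd (by omega) h2
    omega
  have hqq : k * b + (a + b - k) * b = b * (a + b) := by
    have h : k + (a + b - k) = a + b := by omega
    calc k * b + (a+b-k) * b = (k + (a+b-k)) * b := by ring
    _ = (a+b) * b := by rw [h]
    _ = b * (a+b) := by ring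
  have hsum : (k * b + (a+b-k) * b) % (a+b) = 0 := by
    rw [hqq]
    simp
  have hms := modsum (a+b) (k*b) ((a+b-k)*b) (by omega) hsum
  have hm1 : k * b % (a+b) ≠ 0 := fun h => hd1 (Nat.dvd_of_mod_eq_zero h)
  have hm2 : (a+b-k) * b % (a+b) ≠ 0 := fun h => hd2 (Nat.dvd_of_mod_eq_zero h)
  have hms' : k * b % (a+b) + (a+b-k) * b % (a+b) = a+b := by omega
  have hq1 := Nat.div_add_mod (k*b) (a+b)
  have hq2 := Nat.div_add_mod ((a+b-k)*b) (a+b)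
  have hfin : (a+b) * (k*b/(a+b)) + (a+b) * ((a+b-k)*b/(a+b)) + (a+b) = b * (a+b) := by
    omega
  have hd : (a+b)*(k*b/(a+b) + (a+b-k)*b/(a+b) + 1)
      = (a+b)*(k*b/(a+b)) + (a+b)*((a+b-k)*b/(a+b)) + (a+b) := by ring
  have hbn' : b * (a+b) = (a+b) * b := by ring
  have hq : k*b/(a+b) + (a+b-k)*b/(a+b) + 1 = b :=
    Nat.eq_of_mul_eq_mul_left (by omega : 0 < a+b) (by omega)
  omega

lemma count_false_add_true (l : List Bool) : l.count false + l.count true = l.length := by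
  induction l with
  | nil => simp
  | cons x t ih =>
    cases x <;> simp [List.count_cons] <;> omega

lemma count_true_map_not (l : List Bool) : (l.map not).count true = l.count false := by
  have h := List.count_map_of_injective l not (fun a b => by cases a <;> cases b <;> simp) false
  simpa using h

lemma count_false_map_not (l : List Bool) : (l.map not).count false = l.count true := by
  have h := List.count_map_of_injective l not (fun a b => by cases a <;> cases b <;> simp) true
  simpa using h

lemma map_not_map_not (l : List Bool) : (l.map not).map not = l := by
  rw [List.map_map]
  have : (not ∘ not) = id := by funext x; cases x <;> rfl
  rw [this, List.map_id]

lemma balanced_reverse {w : List Bool} (h : Balanced01 w) : Balanced01 w.reverse := by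
  intro u v hu hv hl
  have hu' : u.reverse <:+: w := by
    have := List.reverse_infix.2 hu
    simpa using this
  have hv' : v.reverse <:+: w := by
    have := List.reverse_infix.2 hv
    simpa using this
  have := h u.reverse v.reverse hu' hv' (by simpa using hl)
  simpa [List.count_reverse] using this

lemma balanced_map_not {w : List Bool} (h : Balanced01 w) : Balanced01 (w.map not) := by
  intro u v hu hv hl
  have hu' : u.map not <:+: w := by
    have := List.IsInfix.map not hu
    rwa [map_not_map_not] at this
  have hv' : v.map not <:+: w := by
    have := List.IsInfix.map not hv
    rwa [map_not_map_not] at this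
  have hcount := h (v.map not) (u.map not) hv' hu' (by simp [hl])
  have h1 : (u.map not).count true = u.count false := count_true_map_not u
  have h2 : (v.map not).count true = v.count false := count_true_map_not v
  have h3 := count_false_add_true u
  have h4 := count_false_add_true v
  have h5 : u.count false + u.count true = v.count false + v.count true := by
    rw [h3, h4, hl]
  rw [h1, h2] at hcount
  omega

lemma unbordered_reverse {w : List Bool} (h : Unbordered w) : Unbordered w.reverse := by
  intro u hu hs hne
  have hp : u.reverse <:+ w := by
    have := List.reverse_suffix.2 hu
    simpa using this
  have hq : u.reverse <+: w := by
    have := List.reverse_prefix.2 hs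
    simpa using this
  have hne' : u.reverse ≠ w := by
    intro he
    apply hne
    rw [← he]
    simp
  have := h u.reverse hq hp hne'
  simpa using this

lemma unbordered_map_not {w : List Bool} (h : Unbordered w) : Unbordered (w.map not) := by
  intro u hu hs hne
  have hp : u.map not <+: w := by
    have := List.IsPrefix.map not hu
    rwa [map_not_map_not] at this
  have hq : u.map not <:+ w := by
    have := List.IsSuffix.map not hs
    rwa [map_not_map_not] at this
  have hne' : u.map not ≠ w := by
    intro he
    apply hne
    rw [← he, map_not_map_not]
  have := h (u.map not) hp hq hne'
  rcases u with _ | _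
  · rfl
  · simp at this

lemma flatten_replicate_length {α : Type*} (d : ℕ) (v : List α) :
    ((List.replicate d v).flatten).length = d * v.length := by
  induction d with
  | zero => simp
  | succ d ih =>
    rw [List.replicate_succ, List.flatten_cons, List.length_append, ih]
    ring

lemma unbordered_primitive {w : List Bool} (hw : w ≠ []) (h : Unbordered w) : Primitive w := by
  intro v m hvm
  rcases m with _ | _ | m
  · simp at hvm; exact absurd hvm hw
  · rfl
  · exfalso
    have hv : v ≠ [] := by
      intro he
      rw [he] at hvm
      simp [List.flatten_replicate_nil] at hvm
      · exact hw hvm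
    obtain ⟨u, hu⟩ : ∃ u, u = (List.replicate (m+1) v).flatten := ⟨_, rfl⟩
    have hpre : u <+: w := by
      rw [hvm, hu]
      have : List.replicate (m+2) v = List.replicate (m+1) v ++ [v] := by
        rw [← List.replicate_succ']
      rw [this, List.flatten_append]
      exact ⟨[v].flatten, rfl⟩
    have hsuf : u <:+ w := by
      rw [hvm, hu, List.replicate_succ, List.flatten_cons]
      exact ⟨v, rfl⟩
    have hlen : u.length < w.length := by
      rw [hvm, flatten_replicate_length, hu, flatten_replicate_length]
      have : 0 < v.length := List.length_pos_iff.2 hv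
      have hx : (m+1+1) * v.length = (m+1) * v.length + v.length := by ring
      omega
    have hne : u ≠ w := by
      intro he
      rw [he] at hlen
      omega
    have hnil := h u hpre hsuf hne
    have : 0 < v.length := List.length_pos_iff.2 hv
    have h0 : u.length = (m+1) * v.length := by rw [hu, flatten_replicate_length]
    have h2 : u.length = 0 := by rw [hnil]; rfl
    have h1 : (m+1) * v.length = m * v.length + v.length := by ring
    omega

lemma cnt_append (x y : List Bool) (k : ℕ) :
    cnt (x ++ y) k = cnt x k + cnt y (k - x.length) := by
  unfold cnt
  rw [List.take_append, List.count_append]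

lemma cnt_flatten_rep (a b : ℕ) (hn : 0 < a + b) (d : ℕ) :
    ∀ k, k ≤ d * (a + b) →
      cnt ((List.replicate d (chr a b)).flatten) k = k * b / (a + b) := by
  induction d with
  | zero =>
    intro k hk
    simp at hk
    subst hk
    simp [cnt_zero]
  | succ d ih =>
    intro k hk
    have hdd : (d+1) * (a+b) = d * (a+b) + (a+b) := by ring
    rw [List.replicate_succ, List.flatten_cons, cnt_append]
    rcases le_or_gt k (a + b) with h | h
    · have h0 : k - (chr a b).length = 0 := by rw [chr_length]; omega
      rw [h0, cnt_zero, cnt_chr a b hn k h]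
      omega
    · have h1 : k - (chr a b).length = k - (a+b) := by rw [chr_length]
      rw [h1, cnt_length _ _ (by rw [chr_length]; omega), count_true_chr a b hn,
        ih (k - (a+b)) (by omega)]
      have hsplit : k * b = (k - (a+b)) * b + (a + b) * b := by
        have h2 : k = (k - (a+b)) + (a+b) := by omega
        calc k * b = ((k - (a+b)) + (a+b)) * b := by rw [← h2]
        _ = (k - (a+b)) * b + (a+b) * b := by ring
      rw [hsplit, Nat.add_mul_div_left _ _ hn]
      omega

lemma count_flatten_rep_true (d : ℕ) (v : List Bool) :
    ((List.replicate d v).flatten).count true = d * v.count true := by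
  induction d with
  | zero => simp
  | succ d ih =>
    rw [List.replicate_succ, List.flatten_cons, List.count_append, ih]
    ring

lemma chr_rep (a b d : ℕ) :
    chr (d * a) (d * b) = (List.replicate d (chr a b)).flatten := by
  have h3 : d * a + d * b = d * (a + b) := by ring
  rcases Nat.eq_zero_or_pos (a + b) with hn | hn
  · have ha : a = 0 := by omega
    have hb : b = 0 := by omega
    subst ha hb
    have h1 : chr (d * 0) (d * 0) = [] := by
      apply List.length_eq_zero_iff.1
      rw [chr_length]
      simp
    have h2 : chr 0 0 = [] := by
      apply List.length_eq_zero_iff.1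
      rw [chr_length]
    rw [h1, h2, List.flatten_replicate_nil]
  · apply ext_cnt
    · rw [chr_length, flatten_replicate_length, chr_length]
      omega
    · intro k
      rcases le_or_gt k (d * (a+b)) with hk | hk
      · rw [cnt_flatten_rep a b hn d k hk]
        rcases Nat.eq_zero_or_pos d with hd | hd
        · subst hd
          simp at hk
          subst hk
          simp [cnt_zero]
        · have hdn : 0 < d * (a + b) := Nat.mul_pos hd hn
          rw [cnt_chr (d*a) (d*b) (by omega) k (by omega)]
          rw [h3]
          have h4 : k * (d * b) = d * (k * b) := by ring
          rw [h4, Nat.mul_div_mul_left _ _ hd]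
      · have hl1 : (chr (d*a) (d*b)).length ≤ k := by
          rw [chr_length]; omega
        have hl2 : ((List.replicate d (chr a b)).flatten).length ≤ k := by
          rw [flatten_replicate_length, chr_length]; omega
        rw [cnt_length _ _ hl1, cnt_length _ _ hl2, count_flatten_rep_true,
          count_true_chr a b hn]
        rcases Nat.eq_zero_or_pos d with hd | hd
        · subst hd
          simp only [Nat.zero_mul]
          have h2 : chr 0 0 = [] := by
            apply List.length_eq_zero_iff.1
            rw [chr_length]
          rw [h2]
          simp
        · have hdn : 0 < d * (a + b) := Nat.mul_pos hd hn
          rw [count_true_chr _ _ (by omega)]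

lemma reverse_flatten_rep (d : ℕ) (v : List Bool) :
    ((List.replicate d v).flatten).reverse = (List.replicate d v.reverse).flatten := by
  induction d with
  | zero => simp
  | succ d ih =>
    rw [List.replicate_succ, List.flatten_cons, List.reverse_append, ih,
      List.replicate_succ', List.flatten_append]
    simp

/-- reverse complement -/
def rc (w : List Bool) : List Bool := (w.map not).reverse

lemma rc_rc (w : List Bool) : rc (rc w) = w := by
  unfold rc
  rw [← List.map_reverse, List.reverse_reverse, map_not_map_not]

lemma length_rc (w : List Bool) : (rc w).length = w.length := by simp [rc]

lemma balanced_rc {w : List Bool} (h : Balanced01 w) : Balanced01 (rc w) :=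
  balanced_reverse (balanced_map_not h)

lemma unbordered_rc {w : List Bool} (h : Unbordered w) : Unbordered (rc w) :=
  unbordered_reverse (unbordered_map_not h)

lemma count_true_rc (w : List Bool) : (rc w).count true = w.count false := by
  unfold rc
  rw [List.count_reverse, count_true_map_not]

lemma count_false_rc (w : List Bool) : (rc w).count false = w.count true := by
  unfold rc
  rw [List.count_reverse, count_false_map_not]

lemma head?_rc (w : List Bool) : (rc w).head? = w.getLast?.map not := by
  unfold rc
  rw [List.head?_reverse, List.getLast?_map]

lemma getLast?_rc (w : List Bool) : (rc w).getLast? = w.head?.map not := by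
  unfold rc
  rw [List.getLast?_reverse, List.head?_map]

lemma rc_chr (a b : ℕ) (ha : 1 ≤ a) (hb : 1 ≤ b) : rc (chr b a) = chr a b := by
  have hba : b + a = a + b := Nat.add_comm b a
  have hlen : (rc (chr b a)).length = a + b := by
    rw [length_rc, chr_length]; omega
  apply List.ext_getElem (by rw [hlen, chr_length])
  intro i h1 h2
  rw [hlen] at h1
  have hn : 0 < a + b := by omega
  have e1 : (rc (chr b a))[i]'(by rw [hlen]; exact h1) = !((chr b a)[(a+b) - 1 - i]'(by
      rw [chr_length]; omega)) := by
    unfold rc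
    rw [List.getElem_reverse, List.getElem_map]
    congr 2
    simp [chr_length]
    omega
  rw [e1]
  have hj : (a + b) - 1 - i < b + a := by omega
  rw [chr_getElem b a _ hj, chr_getElem a b i (by omega)]
  simp only [hba]
  -- arithmetic
  have hrn : i * a % (a+b) < a + b := Nat.mod_lt _ hn
  have hsn : i * b % (a+b) < a + b := Nat.mod_lt _ hn
  have hun : (a + b - 1 - i) * a % (a+b) < a + b := Nat.mod_lt _ hn
  have htn : (i+1) * a % (a+b) < a + b := Nat.mod_lt _ hn
  have f1 : i * b % (a+b) + i * a % (a+b) = 0 ∨ i * b % (a+b) + i * a % (a+b) = a + b := by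
    have e : i * b + i * a = i * (a + b) := by ring
    exact modsum (a+b) (i*b) (i*a) hn (by rw [e, Nat.mul_mod_left])
  have f2 : (a + b - 1 - i) * a % (a+b) + (i+1) * a % (a+b) = 0 ∨
      (a + b - 1 - i) * a % (a+b) + (i+1) * a % (a+b) = a + b := by
    have h3 : (a + b - 1 - i) + (i+1) = a + b := by omega
    have key0 := Nat.add_mul ((a+b) - 1 - i) (i+1) a
    rw [h3] at key0
    exact modsum (a+b) _ _ hn (by rw [← key0, Nat.mul_mod_right])
  have f3 : (i+1) * a % (a+b) = i * a % (a+b) + a ∨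
      (i+1) * a % (a+b) + (a + b) = i * a % (a+b) + a := by
    have ha2 : a < a + b := by omega
    have e2 : (i+1) * a = i * a + a := by ring
    have e3 : (i+1) * a % (a+b) = (i * a % (a+b) + a) % (a+b) := by
      rw [e2, Nat.add_mod, Nat.mod_eq_of_lt ha2]
    rcases Nat.lt_or_ge (i * a % (a+b) + a) (a+b) with hc | hc
    · left; rw [e3, Nat.mod_eq_of_lt hc]
    · right
      rw [e3, Nat.mod_eq_sub_mod hc, Nat.mod_eq_of_lt (by omega)]
      omega
  by_cases c1 : a + b ≤ i * b % (a+b) + b <;>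
    by_cases c2 : a + b ≤ (a + b - 1 - i) * a % (a+b) + a <;>
    simp [c1, c2] <;> omega

/-- The substitution 0 ↦ 0, 1 ↦ 01. -/
def Gm (w : List Bool) : List Bool :=
  (w.map (fun x => if x then [false, true] else [false])).flatten

lemma Gm_nil : Gm [] = [] := rfl

lemma Gm_cons (x : Bool) (r : List Bool) :
    Gm (x :: r) = (if x then [false, true] else [false]) ++ Gm r := by
  unfold Gm
  rw [List.map_cons, List.flatten_cons]

lemma Gm_append (x y : List Bool) : Gm (x ++ y) = Gm x ++ Gm y := by
  unfold Gm
  rw [List.map_append, List.flatten_append]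

lemma length_Gm (u : List Bool) : (Gm u).length = u.length + u.count true := by
  induction u with
  | nil => rfl
  | cons x r ih =>
    rw [Gm_cons]
    cases x <;> simp [ih, List.count_cons] <;> omega

lemma count_true_Gm (u : List Bool) : (Gm u).count true = u.count true := by
  induction u with
  | nil => rfl
  | cons x r ih =>
    rw [Gm_cons, List.count_append, ih]
    cases x <;> simp [List.count_cons] <;> omega

lemma count_false_Gm (u : List Bool) : (Gm u).count false = u.length := by
  induction u with
  | nil => rfl
  | cons x r ih =>
    rw [Gm_cons, List.count_append, ih]
    cases x <;> simp [List.count_cons] <;> omega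

lemma Gm_head_false (u : List Bool) (h : u ≠ []) : ∃ r, Gm u = false :: r := by
  rcases u with _ | ⟨x, r⟩
  · exact absurd rfl h
  · rw [Gm_cons]
    cases x
    · exact ⟨Gm r, rfl⟩
    · exact ⟨true :: Gm r, rfl⟩

lemma getLast?_Gm (u : List Bool) : (Gm u).getLast? = u.getLast? := by
  rcases List.eq_nil_or_concat u with h | ⟨s, c, h⟩
  · rw [h]; rfl
  · rw [h, List.concat_eq_append, Gm_append, List.getLast?_concat]
    cases c
    · have : Gm [false] = [false] := rfl
      rw [this, List.getLast?_append]
      rfl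
    · have : Gm [true] = [false, true] := rfl
      rw [this, List.getLast?_append]
      rfl

lemma Gm_prefix {u v : List Bool} (h : u <+: v) : Gm u <+: Gm v := by
  obtain ⟨t, ht⟩ := h
  exact ⟨Gm t, by rw [← Gm_append, ht]⟩

lemma Gm_suffix {u v : List Bool} (h : u <:+ v) : Gm u <:+ Gm v := by
  obtain ⟨t, ht⟩ := h
  exact ⟨Gm t, by rw [← Gm_append, ht]⟩

/-- Inverse of `Gm` on words with no `11` factor starting with `0`. -/
def parse : List Bool → List Bool
  | [] => []
  | false :: true :: r => true :: parse r
  | false :: r => false :: parse r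
  | true :: r => true :: parse r

lemma parse_spec : ∀ w : List Bool, w.head? ≠ some true → ¬ [true, true] <:+: w →
    Gm (parse w) = w := by
  intro w
  induction w using parse.induct with
  | case1 =>
    intro _ _
    rfl
  | case2 r ih =>
    intro _ h11
    have hr1 : r.head? ≠ some true := by
      intro hr
      rcases r with _ | ⟨y, r'⟩
      · simp at hr
      · simp at hr
        subst hr
        exact h11 ⟨[false], r', rfl⟩
    have hr2 : ¬ [true, true] <:+: r := by
      intro hinf
      exact h11 (hinf.trans (List.IsSuffix.isInfix ⟨[false, true], rfl⟩))
    rw [parse, Gm_cons]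
    simp only [if_true]
    rw [ih hr1 hr2]
    rfl
  | case3 r h1 ih =>
    intro hh h11
    have hr1 : r.head? ≠ some true := by
      intro hr
      rcases r with _ | ⟨y, r'⟩
      · simp at hr
      · simp at hr
        subst hr
        exact h1 r' rfl
    have hr2 : ¬ [true, true] <:+: r := by
      intro hinf
      exact h11 (hinf.trans (List.IsSuffix.isInfix ⟨[false], rfl⟩))
    rw [parse]
    · have e : Gm (false :: parse r) = [false] ++ Gm (parse r) := rfl
      rw [e, ih hr1 hr2]
      rfl
    · exact h1
  | case4 r h1 =>
    intro hh _
    exact absurd rfl hh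

lemma claimB : ∀ w : List Bool, ¬ [false, false] <:+: w → w.getLast? = some true →
    w.count false ≤ w.count true := by
  intro w
  induction w using parse.induct with
  | case1 => intro _ h; simp at h
  | case2 r ih =>
    -- w = false :: true :: r
    intro hff hlast
    have hr1 : ¬ [false,false] <:+: r := by
      intro h
      exact hff (h.trans (List.IsSuffix.isInfix ⟨[false, true], rfl⟩))
    rcases List.eq_nil_or_concat r with hr | ⟨s, c, hr⟩
    · subst hr; simp [List.count_cons]
    · have hlast' : r.getLast? = some true := by
        subst hr
        rw [List.concat_eq_append] at hlast ⊢
        rw [show (false :: true :: (s ++ [c])) = (false :: true :: s) ++ [c] by simp] at hlast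
        rw [List.getLast?_concat] at hlast ⊢
        exact hlast
      have := ih hr1 hlast'
      simp [List.count_cons]
      omega
  | case3 r h1 ih =>
    -- w = false :: r with r not starting with true
    intro hff hlast
    rcases r with _ | ⟨y, r'⟩
    · simp at hlast
    · cases y
      · exfalso
        exact hff ⟨[], r', rfl⟩
      · exact absurd rfl (h1 r')
  | case4 r ih =>
    intro hff hlast
    rcases List.eq_nil_or_concat r with hr | ⟨p, c, hr⟩
    · subst hr; simp
    · have hr1 : ¬ [false,false] <:+: r := fun h =>
        hff (h.trans (List.IsSuffix.isInfix ⟨[true], rfl⟩))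
      have hlast' : r.getLast? = some true := by
        rw [List.concat_eq_append] at hr
        have e2 : (true :: r).getLast? = r.getLast? := by
          rw [hr, show true :: (p ++ [c]) = (true :: p) ++ [c] by simp,
            List.getLast?_concat, List.getLast?_concat]
        rw [← e2]
        exact hlast
      have := ih hr1 hlast'
      simp [List.count_cons]
      omega

lemma claimA (w : List Bool) (hff : ¬ [false, false] <:+: w)
    (h11 : [true, true] <:+: w) (hlast : w.getLast? = some true) :
    w.count false + 1 ≤ w.count true := by
  obtain ⟨s, t, hst⟩ := h11
  have hs1 : ¬ [false,false] <:+: (s ++ [true]) := by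
    intro h
    apply hff
    apply h.trans
    exact ⟨[], true :: t, by rw [← hst]; simp⟩
  have hBs := claimB (s ++ [true]) hs1 List.getLast?_concat
  have hBt : t.count false ≤ t.count true := by
    rcases List.eq_nil_or_concat t with ht | ⟨p, c, ht⟩
    · subst ht; simp
    · rw [List.concat_eq_append] at ht
      have hlt : t.getLast? = some true := by
        have e1 : t.getLast? = some c := by rw [ht, List.getLast?_concat]
        have e2 : w.getLast? = t.getLast? := by
          rw [← hst, List.getLast?_append, e1]
          rfl
        rw [e1]
        rw [e2, e1] at hlast
        exact hlast
      have htf : ¬ [false,false] <:+: t := by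
        intro h
        exact hff (h.trans (List.IsSuffix.isInfix ⟨s ++ [true,true], hst⟩))
      exact claimB t htf hlt
  rw [← hst]
  simp [List.count_append, List.count_cons] at hBs ⊢
  omega

lemma no_ff {w : List Bool} (hb : Balanced01 w) (h11 : [true, true] <:+: w) :
    ¬ [false, false] <:+: w := by
  intro hff
  have := hb [true, true] [false, false] h11 hff rfl
  simp [List.count_cons] at this

lemma common_prefix_split : ∀ (x y : List Bool), x.length = y.length → x ≠ y →
    ∃ p c d x' y', c ≠ d ∧ x = p ++ c :: x' ∧ y = p ++ d :: y' ∧ x'.length = y'.length := by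
  intro x
  induction x with
  | nil =>
    intro y hl hne
    cases y with
    | nil => exact absurd rfl hne
    | cons b y => simp at hl
  | cons a x ih =>
    intro y hl hne
    cases y with
    | nil => simp at hl
    | cons b y =>
      by_cases hab : a = b
      · subst hab
        have hxy : x ≠ y := fun h => hne (by rw [h])
        obtain ⟨p, c, d, x', y', h1, h2, h3, h4⟩ := ih y (by simpa using hl) hxy
        exact ⟨a :: p, c, d, x', y', h1, by rw [h2]; rfl, by rw [h3]; rfl, h4⟩
      · exact ⟨[], a, b, x, y, hab, rfl, rfl, by simpa using hl⟩

lemma violation_z (w : List Bool) :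
    ∀ k (u v : List Bool), u.length = k → v.length = k → u <:+: w → v <:+: w →
      v.count true + 2 ≤ u.count true →
      ∃ z, (false :: (z ++ [false])) <:+: w ∧ (true :: (z ++ [true])) <:+: w := by
  intro k
  induction k using Nat.strong_induction_on with
  | _ k ih =>
    intro u v hul hvl hu hv hc
    rcases u with _ | ⟨a, u1⟩
    · simp at hc
    rcases v with _ | ⟨b, v1⟩
    · simp at hvl
      simp at hul
      omega
    have hu1 : u1 <:+: w := (List.suffix_cons a u1).isInfix.trans hu
    have hv1 : v1 <:+: w := (List.suffix_cons b v1).isInfix.trans hv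
    simp only [List.length_cons] at hul hvl
    have hk1 : 1 ≤ k := by omega
    cases a
    · cases b
      · -- a = false, b = false : drop first letters
        refine ih (k-1) (by omega) u1 v1 (by omega) (by omega) hu1 hv1 ?_
        simp [List.count_cons] at hc
        omega
      · -- a = false, b = true
        refine ih (k-1) (by omega) u1 v1 (by omega) (by omega) hu1 hv1 ?_
        simp [List.count_cons] at hc
        omega
    · cases b
      · -- a = true, b = false : the hard case
        rcases List.eq_nil_or_concat u1 with h0 | ⟨u2, a', hu2⟩
        · subst h0
          simp [List.count_cons] at hc
        rcases List.eq_nil_or_concat v1 with h0 | ⟨v2, b', hv2⟩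
        · subst h0
          rw [List.concat_eq_append] at hu2
          subst hu2
          simp at hul hvl
          omega
        rw [List.concat_eq_append] at hu2 hv2
        subst hu2
        subst hv2
        simp [List.length_append] at hul hvl
        have hdrop : ∀ c1 c2 : Bool, (true :: u2) <:+: w → (false :: v2) <:+: w →
            List.count true (false :: v2) + 2 ≤ List.count true (true :: u2) →
            ∃ z, (false :: (z ++ [false])) <:+: w ∧ (true :: (z ++ [true])) <:+: w := by
          intro _ _ h1 h2 h3
          exact ih (k-1) (by omega) (true :: u2) (false :: v2) (by simp; omega)
            (by simp; omega) h1 h2 h3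
        have hpu : (true :: u2) <:+: w :=
          (List.IsPrefix.isInfix ⟨[a'], by simp⟩).trans hu
        have hpv : (false :: v2) <:+: w :=
          (List.IsPrefix.isInfix ⟨[b'], by simp⟩).trans hv
        cases a'
        · -- a' = false
          simp [List.count_append, List.count_cons] at hc
          -- ct u = 1 + ct u2, ct v = ct v2 + ct[b']
          apply hdrop true true hpu hpv
          simp [List.count_cons]
          cases b' <;> simp [List.count_cons] at hc <;> omega
        · cases b'
          · -- a' = true, b' = false : both ends differ
            simp [List.count_append, List.count_cons] at hc
            by_cases he : u2 = v2
            · subst he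
              refine ⟨u2, ?_, ?_⟩
              · simpa using hv
              · simpa using hu
            · obtain ⟨p, c, d, x, y, hcd, hx, hy, hxy⟩ :=
                common_prefix_split u2 v2 (by omega) he
              subst hx
              subst hy
              cases c
              · cases d
                · exact absurd rfl hcd
                · -- c = false, d = true : recurse on suffix pair
                  have hxk : x.length + 1 < k := by
                    simp [List.length_append] at hul
                    omega
                  refine ih (x.length + 1) hxk (x ++ [true]) (y ++ [false])
                    (by simp) (by simp; omega) ?_ ?_ ?_
                  · refine (List.IsSuffix.isInfix ⟨true :: p ++ [false], ?_⟩).trans hu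
                    simp
                  · refine (List.IsSuffix.isInfix ⟨false :: p ++ [true], ?_⟩).trans hv
                    simp
                  · simp [List.count_append, List.count_cons] at hc ⊢
                    omega
              · cases d
                · -- c = true, d = false : found the pattern, z = p
                  refine ⟨p, ?_, ?_⟩
                  · refine (List.IsPrefix.isInfix ⟨y ++ [false], ?_⟩).trans hv
                    simp
                  · refine (List.IsPrefix.isInfix ⟨x ++ [true], ?_⟩).trans hu
                    simp
                · exact absurd rfl hcd
          · -- a' = true, b' = true : drop last letters
            apply hdrop true true hpu hpv
            simp [List.count_append, List.count_cons] at hc ⊢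
            omega
      · -- a = true, b = true : drop first letters
        refine ih (k-1) (by omega) u1 v1 (by omega) (by omega) hu1 hv1 ?_
        simp [List.count_cons] at hc
        omega

lemma balanced_Gm_inv (w' : List Bool) (hb : Balanced01 (Gm w'))
    (hlast : w'.getLast? = some true) : Balanced01 w' := by
  by_contra hnb
  unfold Balanced01 at hnb
  push_neg at hnb
  obtain ⟨u, v, hu, hv, hl, hgt⟩ := hnb
  have hc : v.count true + 2 ≤ u.count true := by omega
  obtain ⟨z, hz0, hz1⟩ := violation_z w' u.length u v rfl hl.symm hu hv hc
  obtain ⟨s, t, hst⟩ := hz1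
  obtain ⟨s', t', hst'⟩ := hz0
  have ht' : t' ≠ [] := by
    intro h
    subst h
    have hwl : w'.getLast? = some false := by
      rw [← hst', List.append_nil,
        show s' ++ (false :: (z ++ [false])) = (s' ++ false :: z) ++ [false] by simp,
        List.getLast?_concat]
    rw [hwl] at hlast
    simp at hlast
  obtain ⟨c, t'', hc'⟩ : ∃ c t'', t' = c :: t'' := by
    rcases t' with _ | ⟨c, t''⟩
    · exact absurd rfl ht'
    · exact ⟨c, t'', rfl⟩
  have hU : (true :: (Gm z ++ [false, true])) <:+: Gm w' := by
    rw [← hst, Gm_append, Gm_append]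
    have e : Gm (true :: (z ++ [true])) = [false, true] ++ (Gm z ++ [false, true]) := by
      rw [Gm_cons, Gm_append]
      rfl
    rw [e]
    exact ⟨Gm s ++ [false], Gm t, by simp⟩
  have hV : (false :: (Gm z ++ [false, false])) <:+: Gm w' := by
    rw [← hst', hc', Gm_append, Gm_append]
    have e : Gm (false :: (z ++ [false])) = [false] ++ (Gm z ++ [false]) := by
      rw [Gm_cons, Gm_append]
      rfl
    rw [e]
    obtain ⟨r, hr⟩ := Gm_head_false (c :: t'') (by simp)
    rw [hr]
    exact ⟨Gm s', r, by simp⟩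
  have hfin := hb _ _ hU hV (by simp)
  simp [List.count_append, List.count_cons] at hfin
  omega

lemma cnt_mono_succ (u : List Bool) (j : ℕ) (hj : j < u.length) :
    cnt u (j+1) = cnt u j ∨ cnt u (j+1) = cnt u j + 1 := by
  rw [cnt_succ u j hj]
  cases u[j] <;> simp

lemma cnt_full (u : List Bool) : cnt u u.length = u.count true := cnt_length u _ le_rfl

lemma cnt_Gm_at (u : List Bool) (j : ℕ) (hj : j ≤ u.length) :
    cnt (Gm u) (j + cnt u j) = cnt u j := by
  have hcc : cnt u j = (u.take j).count true := rfl
  have hsplit : Gm u = Gm (u.take j) ++ Gm (u.drop j) := by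
    rw [← Gm_append, List.take_append_drop]
  have hlen : (Gm (u.take j)).length = j + cnt u j := by
    rw [length_Gm, List.length_take]
    omega
  have key : (Gm u).take (j + cnt u j) = Gm (u.take j) := by
    rw [hsplit, ← hlen, List.take_left]
  show ((Gm u).take (j + cnt u j)).count true = cnt u j
  rw [key, count_true_Gm, hcc]

lemma cnt_Gm_mid (u : List Bool) (j : ℕ) (hj : j < u.length) :
    cnt (Gm u) (j + cnt u j + 1) = cnt u j := by
  have hcc : cnt u j = (u.take j).count true := rfl
  have hsplit : Gm u = Gm (u.take j) ++ Gm (u.drop j) := by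
    rw [← Gm_append, List.take_append_drop]
  have hlen : (Gm (u.take j)).length = j + cnt u j := by
    rw [length_Gm, List.length_take]
    omega
  obtain ⟨r, hr⟩ := Gm_head_false (u.drop j) (by
    intro h
    have := List.drop_eq_nil_iff.1 h
    omega)
  have hle : (Gm (u.take j)).length ≤ j + cnt u j + 1 := by rw [hlen]; omega
  have h1 : j + cnt u j + 1 - (Gm (u.take j)).length = 1 := by rw [hlen]; omega
  have key : (Gm u).take (j + cnt u j + 1) = Gm (u.take j) ++ [false] := by
    rw [hsplit, List.take_append, List.take_of_length_le hle, h1, hr]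
    rfl
  show ((Gm u).take (j + cnt u j + 1)).count true = cnt u j
  rw [key, List.count_append, count_true_Gm, hcc]
  simp

lemma cover (u : List Bool) : ∀ k, k ≤ (Gm u).length →
    (∃ j, j ≤ u.length ∧ k = j + cnt u j) ∨
    (∃ j, j < u.length ∧ cnt u (j+1) = cnt u j + 1 ∧ k = j + cnt u j + 1) := by
  intro k
  induction k with
  | zero =>
    intro _
    left
    exact ⟨0, Nat.zero_le _, by simp [cnt_zero]⟩
  | succ k ihk =>
    intro hk
    have hGl : (Gm u).length = u.length + cnt u u.length := by
      rw [length_Gm, cnt_full]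
    rcases ihk (by omega) with ⟨j, hj, he⟩ | ⟨j, hj, hstep, he⟩
    · have hjlt : j < u.length := by
        rcases Nat.lt_or_ge j u.length with h | h
        · exact h
        · exfalso
          have hje : j = u.length := by omega
          subst hje
          omega
      rcases cnt_mono_succ u j hjlt with h0 | h1
      · left; exact ⟨j+1, by omega, by omega⟩
      · right; exact ⟨j, hjlt, h1, by omega⟩
    · left
      exact ⟨j+1, by omega, by omega⟩

lemma floor_step (m y j e : ℕ) (hm : 0 < m) (he : e ≤ 1) :
    (j + j * y / m + e) * y / (m + y) = j * y / m := by
  have hq := Nat.div_add_mod (j*y) m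
  have hr : j*y % m < m := Nat.mod_lt _ hm
  have e1 : (j + j*y/m + e) * y = j*y + (j*y/m)*y + e*y := by ring
  have e2 : (m+y) * (j*y/m) = m*(j*y/m) + (j*y/m)*y := by ring
  have key : (j + j*y/m + e) * y = (j*y % m + e*y) + (m+y) * (j*y/m) := by omega
  rw [key, Nat.add_mul_div_left _ _ (by omega : 0 < m + y)]
  have hey : e * y ≤ 1 * y := Nat.mul_le_mul_right y he
  have : (j*y % m + e*y) / (m+y) = 0 := Nat.div_eq_of_lt (by omega)
  omega

lemma Gm_chr (x y : ℕ) (hx : 0 < x + y) : Gm (chr x y) = chr (x + y) y := by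
  have hm : (chr x y).length = x + y := chr_length x y
  have hGlen : (Gm (chr x y)).length = (x + y) + y := by
    rw [length_Gm, hm, count_true_chr x y hx]
  apply ext_cnt
  · rw [hGlen, chr_length]
  · intro k
    rcases le_or_gt k ((Gm (chr x y)).length) with hk | hk
    · rcases cover (chr x y) k hk with ⟨j, hj, he⟩ | ⟨j, hj, hstep, he⟩
      · have hj' : j ≤ x + y := by rw [hm] at hj; exact hj
        have h1 : cnt (Gm (chr x y)) k = cnt (chr x y) j := by
          rw [he]; exact cnt_Gm_at _ j hj
        rw [h1, cnt_chr x y hx j hj']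
        have h2 : cnt (chr x y) j = j * y / (x+y) := cnt_chr x y hx j hj'
        rw [cnt_chr (x+y) y (by omega) k (by rw [← hGlen]; exact hk)]
        rw [he, h2]
        exact (floor_step (x+y) y j 0 hx (by omega)).symm
      · have hj' : j < x + y := by rw [hm] at hj; exact hj
        have h1 : cnt (Gm (chr x y)) k = cnt (chr x y) j := by
          rw [he]; exact cnt_Gm_mid _ j hj
        rw [h1, cnt_chr x y hx j (by omega)]
        have h2 : cnt (chr x y) j = j * y / (x+y) := cnt_chr x y hx j (by omega)
        rw [cnt_chr (x+y) y (by omega) k (by rw [← hGlen]; exact hk)]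
        rw [he, h2]
        exact (floor_step (x+y) y j 1 hx (by omega)).symm
    · rw [cnt_length _ _ (le_of_lt hk), count_true_Gm, count_true_chr x y hx,
        cnt_length _ _ (by rw [chr_length]; omega), count_true_chr (x+y) y (by omega)]

lemma getLast?_eq_concat {v : List Bool} {x : Bool} (h : v.getLast? = some x) :
    ∃ s, v = s ++ [x] := by
  rcases List.eq_nil_or_concat v with h0 | ⟨s, c, h0⟩
  · rw [h0] at h; simp at h
  · rw [List.concat_eq_append] at h0
    rw [h0, List.getLast?_concat] at h
    simp at h
    subst h
    exact ⟨s, h0⟩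

lemma head_ne_last {v : List Bool} (hu : Unbordered v) (h2 : 2 ≤ v.length) :
    v.head? ≠ v.getLast? := by
  intro he
  obtain ⟨x, t, hx⟩ : ∃ x t, v = x :: t := by
    rcases v with _ | ⟨x, t⟩
    · simp at h2
    · exact ⟨x, t, rfl⟩
  have hh : v.head? = some x := by rw [hx]; rfl
  have hl : v.getLast? = some x := by rw [← he, hh]
  obtain ⟨s, hs⟩ := getLast?_eq_concat hl
  have hb := hu [x] ⟨t, by rw [hx]; rfl⟩ ⟨s, by rw [hs]⟩
    (by intro h; rw [← h] at h2; simp at h2)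
  simp at hb

lemma chr10 : chr 1 0 = [false] := by decide
lemma chr01 : chr 0 1 = [true] := by decide
lemma chr11 : chr 1 1 = [false, true] := by decide

lemma mainLem : ∀ N w, w.length + w.count true ≤ N → Balanced01 w → Unbordered w →
    w.head? = some false → w.getLast? = some true →
    w = chr (w.count false) (w.count true) := by
  intro N
  induction N with
  | zero =>
    intro w hN _ _ hh _
    rcases w with _ | ⟨c, t⟩
    · simp at hh
    · simp at hN
  | succ N ihN =>
    intro w hN hb hub hh hl
    obtain ⟨t0, hcons⟩ : ∃ t0, w = false :: t0 := by
      rcases w with _ | ⟨c, t0⟩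
      · simp at hh
      · simp at hh
        rw [hh]
        exact ⟨t0, rfl⟩
    have hwne : w ≠ [] := by rw [hcons]; simp
    have hbpos : 1 ≤ w.count true := by
      obtain ⟨s, hs⟩ := getLast?_eq_concat hl
      rw [hs, List.count_append]
      simp
    have hapos : 1 ≤ w.count false := by
      rw [hcons]
      simp [List.count_cons]
    by_cases h11 : [true, true] <:+: w
    · have hff := no_ff hb h11
      have hba : w.count false + 1 ≤ w.count true := claimA w hff h11 hl
      have h1 := ihN (rc w) (by rw [length_rc, count_true_rc]; omega)
        (balanced_rc hb) (unbordered_rc hub)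
        (by rw [head?_rc, hl]; rfl)
        (by rw [getLast?_rc, hh]; rfl)
      rw [count_false_rc, count_true_rc] at h1
      have h2 : rc (rc w) = rc (chr (w.count true) (w.count false)) := by rw [← h1]
      rw [rc_rc, rc_chr _ _ hapos hbpos] at h2
      exact h2
    · have hGm : Gm (parse w) = w := parse_spec w (by rw [hh]; simp) h11
      have hlast' : (parse w).getLast? = some true := by
        rw [← getLast?_Gm, hGm]; exact hl
      have hw'ne : parse w ≠ [] := by
        intro h
        rw [h] at hGm
        exact hwne hGm.symm
      have hb' : Balanced01 (parse w) := balanced_Gm_inv _ (by rw [hGm]; exact hb) hlast'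
      have hub' : Unbordered (parse w) := by
        intro u hupre husuf hune
        by_contra hne0
        have hGpre : Gm u <+: w := by rw [← hGm]; exact Gm_prefix hupre
        have hGsuf : Gm u <:+ w := by rw [← hGm]; exact Gm_suffix husuf
        have hlt : u.length < (parse w).length := by
          have h3 := hupre.length_le
          rcases Nat.lt_or_ge u.length (parse w).length with h | h
          · exact h
          · exact absurd (hupre.eq_of_length (by omega)) hune
        have hctle : u.count true ≤ (parse w).count true :=
          hupre.sublist.count_le true
        have hGne : Gm u ≠ w := by
          intro h
          have h4 : (Gm u).length = w.length := by rw [h]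
          rw [length_Gm, ← hGm, length_Gm] at h4
          omega
        have h5 := hub (Gm u) hGpre hGsuf hGne
        have h6 : (Gm u).length = 0 := by rw [h5]; rfl
        rw [length_Gm] at h6
        exact hne0 (List.length_eq_zero_iff.1 (by omega))
      have hcf : w.count false = (parse w).length := by
        rw [← count_false_Gm (parse w), hGm]
      have hct : w.count true = (parse w).count true := by
        rw [← count_true_Gm (parse w), hGm]
      rcases Nat.lt_or_ge (parse w).length 2 with hs2 | hs2
      · have hone : parse w = [true] := by
          rcases hpw : parse w with _ | ⟨c, t⟩
          · exact absurd hpw hw'ne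
          · rcases t with _ | ⟨d, t⟩
            · rw [hpw] at hlast'
              simp at hlast'
              rw [hlast']
            · rw [hpw] at hs2
              simp at hs2
        have hcf1 : w.count false = 1 := by rw [hcf, hone]; rfl
        have hct1 : w.count true = 1 := by rw [hct, hone]; rfl
        rw [hcf1, hct1, chr11, ← hGm, hone]
        rfl
      · have hhl' := head_ne_last hub' hs2
        have hhead' : (parse w).head? = some false := by
          rcases hpw : parse w with _ | ⟨c, t⟩
          · exact absurd hpw hw'ne
          · cases c
            · rfl
            · exfalso
              apply hhl'
              rw [hpw] at hlast' ⊢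
              rw [hlast']
              rfl
        have hm : (parse w).length + (parse w).count true ≤ N := by
          have hlG : w.length = (parse w).length + (parse w).count true := by
            rw [← length_Gm (parse w), hGm]
          have hbp : 1 ≤ (parse w).count true := by rw [← hct]; exact hbpos
          omega
        have h1 := ihN (parse w) hm hb' hub' hhead' hlast'
        have hcc' := count_false_add_true (parse w)
        have hlpos : 1 ≤ (parse w).length := by
          rcases hpw : parse w with _ | ⟨c, t⟩
          · exact absurd hpw hw'ne
          · simp
        rw [hcf, hct]
        conv_lhs => rw [← hGm, h1]
        rw [Gm_chr _ _ (by omega : 0 < (parse w).count false + (parse w).count true)]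
        congr 1

theorem stmt7' (w : List Bool) (hw : w ≠ []) :
    (Primitive w ∧ ∃ a b : ℕ, ¬(a = 0 ∧ b = 0) ∧
        (w = chr a b ∨ w = (chr a b).reverse)) ↔
      Balanced01 w ∧ Unbordered w := by
  constructor
  · rintro ⟨hprim, a, b, hab0, hwc⟩
    have hd : Nat.gcd a b = 1 := by
      have hd0 : 0 < Nat.gcd a b := by
        rcases Nat.eq_zero_or_pos (Nat.gcd a b) with h | h
        · exfalso
          exact hab0 ⟨Nat.eq_zero_of_gcd_eq_zero_left h, Nat.eq_zero_of_gcd_eq_zero_right h⟩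
        · exact h
      have ha' : Nat.gcd a b * (a / Nat.gcd a b) = a :=
        Nat.mul_div_cancel' (Nat.gcd_dvd_left a b)
      have hb' : Nat.gcd a b * (b / Nat.gcd a b) = b :=
        Nat.mul_div_cancel' (Nat.gcd_dvd_right a b)
      have hrep := chr_rep (a / Nat.gcd a b) (b / Nat.gcd a b) (Nat.gcd a b)
      rw [ha', hb'] at hrep
      rcases hwc with h | h
      · exact hprim _ (Nat.gcd a b) (by rw [h, hrep])
      · have h2 : (chr a b).reverse = (List.replicate (Nat.gcd a b)
            (chr (a / Nat.gcd a b) (b / Nat.gcd a b)).reverse).flatten := by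
          rw [hrep, reverse_flatten_rep]
        exact hprim _ (Nat.gcd a b) (by rw [h, h2])
    have hbal := balanced_chr a b
    have hunb := unbordered_chr a b hd
    rcases hwc with h | h
    · exact ⟨by rw [h]; exact hbal, by rw [h]; exact hunb⟩
    · exact ⟨by rw [h]; exact balanced_reverse hbal,
        by rw [h]; exact unbordered_reverse hunb⟩
  · rintro ⟨hbal, hunb⟩
    refine ⟨unbordered_primitive hw hunb, w.count false, w.count true, ?_, ?_⟩
    · rintro ⟨h1, h2⟩
      have h3 := count_false_add_true w
      have h4 : w.length = 0 := by omega
      exact hw (List.length_eq_zero_iff.1 h4)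
    · rcases Nat.lt_or_ge w.length 2 with h2 | h2
      · obtain ⟨x, hx⟩ : ∃ x, w = [x] := by
          rcases w with _ | ⟨c, t⟩
          · exact absurd rfl hw
          · rcases t with _ | ⟨d, t⟩
            · exact ⟨c, rfl⟩
            · exact absurd h2 (by simp)
        cases x
        · left
          rw [hx]
          have e1 : ([false] : List Bool).count false = 1 := rfl
          have e2 : ([false] : List Bool).count true = 0 := rfl
          rw [e1, e2, chr10]
        · left
          rw [hx]
          have e1 : ([true] : List Bool).count false = 0 := rfl
          have e2 : ([true] : List Bool).count true = 1 := rfl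
          rw [e1, e2, chr01]
      · have hhl := head_ne_last hunb h2
        obtain ⟨c, t, hct⟩ : ∃ c t, w = c :: t := by
          rcases w with _ | ⟨c, t⟩
          · exact absurd rfl hw
          · exact ⟨c, t, rfl⟩
        have hh : w.head? = some c := by rw [hct]; rfl
        obtain ⟨y, hy⟩ : ∃ y, w.getLast? = some y := by
          rcases List.eq_nil_or_concat w with h0 | ⟨s, d, h0⟩
          · exact absurd h0 hw
          · rw [List.concat_eq_append] at h0
            exact ⟨d, by rw [h0, List.getLast?_concat]⟩
        have hcy : c ≠ y := by
          intro h
          exact hhl (by rw [hh, hy, h])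
        cases c
        · have hyt : y = true := by
            rcases y with _ | _
            · exact absurd rfl hcy
            · rfl
          left
          exact mainLem (w.length + w.count true) w le_rfl hbal hunb hh
            (by rw [hy, hyt])
        · have hyt : y = false := by
            rcases y with _ | _
            · rfl
            · exact absurd rfl hcy
          right
          have hrev := mainLem (w.reverse.length + w.reverse.count true) w.reverse le_rfl
            (balanced_reverse hbal) (unbordered_reverse hunb)
            (by rw [List.head?_reverse, hy, hyt])
            (by rw [List.getLast?_reverse, hh])
          rw [List.count_reverse, List.count_reverse] at hrev
          have hfin := congrArg List.reverse hrev
          rw [List.reverse_reverse] at hfin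
          exact hfin

end ChristoffelAux

/-- A word is a primitive (lower or upper) Christoffel word iff it is balanced and
unbordered. -/
theorem stmt7 (w : List Bool) (hw : w ≠ []) :
    (Primitive w ∧ ∃ a b : ℕ, ¬(a = 0 ∧ b = 0) ∧
        (w = chr a b ∨ w = (chr a b).reverse)) ↔
      Balanced01 w ∧ Unbordered w := by
  exact stmt7' w hw
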